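/- Let L be a Lie ring whose additive group is generated by finitely many elements x₁,…,xₘ. Then L satisfies the n-Engel condition (i.e. (ad x)ⁿ y = 0 for all x, y ∈ L) if and only if (ad x)ⁿ y = 0 for all y ∈ L and all x ∈ L that are nonnegative integer linear combinations of x₁,…,xₘ. -/

import Mathlib

/-- A polynomial function (with coefficients in an abelian group) that vanishes
on all sufficiently large naturals vanishes at every integer. -/
lemma aux_poly_vanish {M : Type*} [AddCommGroup M] :
    ∀ (n : ℕ) (u : ℕ → M) (k : ℕ),
      (∀ t : ℕ, k ≤ t → ∑ j ∈ Finset.range (n+1), ((t : ℤ)^j) • u j = 0) →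
      ∀ t : ℤ, ∑ j ∈ Finset.range (n+1), t^j • u j = 0 := by
  intro n
  induction n with
  | zero =>
    intro u k h t
    simpa using h k le_rfl
  | succ n ih =>
    intro u k h
    set w : ℕ → M := fun i =>
      ∑ j ∈ Finset.range (n+2), (((j.choose i : ℤ)) - if i = j then 1 else 0) • u j with hw_def
    have binom : ∀ (j : ℕ), j < n + 2 → ∀ t : ℤ,
        (t+1)^j - t^j =
          ∑ i ∈ Finset.range (n+2), t^i * ((j.choose i : ℤ) - if i = j then 1 else 0) := by
      intro j hj t
      have h1 : (t+1)^j = ∑ i ∈ Finset.range (j+1), t^i * (j.choose i : ℤ) := by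
        rw [add_pow]
        simp
      have h2 : (t+1)^j = ∑ i ∈ Finset.range (n+2), t^i * (j.choose i : ℤ) := by
        rw [h1]
        apply Finset.sum_subset
        · exact Finset.range_subset_range.mpr (by omega)
        · intro i _ hi
          have : j < i := by simp only [Finset.mem_range] at hi ⊢; omega
          rw [Nat.choose_eq_zero_of_lt this]
          simp
      have h3 : t^j = ∑ i ∈ Finset.range (n+2), t^i * (if i = j then 1 else 0) := by
        simp_rw [mul_ite, mul_one, mul_zero]
        rw [Finset.sum_ite_eq' (Finset.range (n+2)) j (fun i => t^i)]
        simp [Finset.mem_range.mpr hj]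
      rw [h2, h3, ← Finset.sum_sub_distrib]
      exact Finset.sum_congr rfl (fun i _ => (mul_sub _ _ _).symm)
    have key : ∀ t : ℤ,
        (∑ j ∈ Finset.range (n+2), (t+1)^j • u j) - (∑ j ∈ Finset.range (n+2), t^j • u j)
          = ∑ i ∈ Finset.range (n+2), t^i • w i := by
      intro t
      rw [← Finset.sum_sub_distrib]
      simp_rw [← sub_smul, hw_def, Finset.smul_sum, smul_smul]
      rw [Finset.sum_comm]
      apply Finset.sum_congr rfl
      intro j hj
      rw [← Finset.sum_smul, ← binom j (Finset.mem_range.mp hj) t]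
    have wtop : w (n+1) = 0 := by
      rw [hw_def]
      apply Finset.sum_eq_zero
      intro j hj
      have hj' : j ≤ n + 1 := by simpa [Nat.lt_succ_iff] using hj
      rcases eq_or_lt_of_le hj' with h' | h'
      · simp [h', Nat.choose_self]
      · rw [Nat.choose_eq_zero_of_lt h']
        have : ¬ (n + 1 = j) := by omega
        simp [this]
    have key' : ∀ t : ℤ,
        (∑ j ∈ Finset.range (n+2), (t+1)^j • u j) - (∑ j ∈ Finset.range (n+2), t^j • u j)
          = ∑ i ∈ Finset.range (n+1), t^i • w i := by
      intro t
      rw [key t, Finset.sum_range_succ, wtop, smul_zero, add_zero]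
    have hw : ∀ t : ℕ, k ≤ t → ∑ i ∈ Finset.range (n+1), ((t : ℤ)^i) • w i = 0 := by
      intro t ht
      have h1 := h t ht
      have h2 := h (t+1) (le_trans ht (Nat.le_succ t))
      have := key' (t : ℤ)
      rw [h1] at this
      push_cast at h2
      rw [h2] at this
      simpa using this.symm
    have hih := ih w k hw
    have const : ∀ t : ℤ,
        (∑ j ∈ Finset.range (n+2), (t+1)^j • u j) = ∑ j ∈ Finset.range (n+2), t^j • u j := by
      intro t
      have := key' t
      rw [hih t] at this
      exact sub_eq_zero.mp this
    have all0 : ∀ t : ℤ, (∑ j ∈ Finset.range (n+2), t^j • u j)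
        = ∑ j ∈ Finset.range (n+2), (0:ℤ)^j • u j := by
      intro t
      induction t using Int.induction_on with
      | zero => rfl
      | succ i ihp => rw [const (i:ℤ), ihp]
      | pred i ihn =>
        have := const (-(i:ℤ) - 1)
        rw [show (-(i:ℤ) - 1 + 1) = -(i:ℤ) by ring] at this
        rw [← this, ihn]
    have h0 : (∑ j ∈ Finset.range (n+2), ((0:ℤ))^j • u j) = 0 := by
      rw [← all0 (k : ℤ)]
      exact h k le_rfl
    intro t
    rw [all0 t, h0]
  
/-- Expansion of `(A + t • B)^n` as a polynomial in `t` with coefficients in the ring. -/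
lemma aux_expand {R : Type*} [Ring R] (A B : R) (n : ℕ) :
    ∃ C : ℕ → R, (∀ j, n < j → C j = 0) ∧ C 0 = A ^ n ∧
      ∀ t : ℤ, (A + t • B)^n = ∑ j ∈ Finset.range (n+1), t^j • C j := by
  induction n with
  | zero =>
    refine ⟨fun j => if j = 0 then 1 else 0, ?_, by simp, ?_⟩
    · intro j hj
      have : j ≠ 0 := by omega
      simp [this]
    · intro t
      simp
  | succ n ih =>
    obtain ⟨C, hCtop, hC0, hC⟩ := ih
    refine ⟨fun j => A * C j + (if j = 0 then 0 else B * C (j-1)), ?_, ?_, ?_⟩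
    · intro j hj
      dsimp only
      have hne : j ≠ 0 := by omega
      rw [hCtop j (by omega), if_neg hne, hCtop (j-1) (by omega)]
      simp
    · dsimp only
      rw [hC0, if_pos rfl, add_zero, pow_succ']
    · intro t
      have expand1 : (A + t • B)^(n+1) = (A + t • B) * (A + t • B)^n := pow_succ' _ _
      rw [expand1, hC t, add_mul, Finset.mul_sum, Finset.mul_sum]
      have e1 : ∀ j, A * (t^j • C j) = t^j • (A * C j) := fun j => (mul_smul_comm _ _ _)
      have e2 : ∀ j, (t • B) * (t^j • C j) = t^(j+1) • (B * C j) := by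
        intro j
        rw [smul_mul_assoc, mul_smul_comm, smul_smul, pow_succ']
      simp_rw [e1, e2]
      rw [show Finset.range (n+1+1) = Finset.range (n+2) from rfl]
      have rhs : ∑ j ∈ Finset.range (n+2),
          t^j • (A * C j + (if j = 0 then 0 else B * C (j-1)))
          = (∑ j ∈ Finset.range (n+2), t^j • (A * C j))
            + ∑ j ∈ Finset.range (n+2), t^j • (if j = 0 then 0 else B * C (j-1)) := by
        rw [← Finset.sum_add_distrib]
        exact Finset.sum_congr rfl (fun j _ => smul_add _ _ _)
      rw [rhs]
      congr 1
      · rw [Finset.sum_range_succ (fun j => t^j • (A * C j)) (n+1),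
            hCtop (n+1) (Nat.lt_succ_self n), mul_zero, smul_zero, add_zero]
      · rw [Finset.sum_range_succ' (fun j => t^j • (if j = 0 then 0 else B * C (j-1))) (n+1)]
        simp only [Nat.succ_ne_zero, if_neg, Nat.add_sub_cancel, reduceIte, smul_zero, add_zero,
          pow_zero]

theorem stmt_3 (L : Type*) [LieRing L] (m n : ℕ) (x : Fin m → L)
    (hgen : Submodule.span ℤ (Set.range x) = ⊤) :
    (∀ a y : L, ((LieAlgebra.ad ℤ L a) ^ n) y = 0) ↔
      (∀ c : Fin m → ℕ, ∀ y : L,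
        ((LieAlgebra.ad ℤ L (∑ i, (c i : ℤ) • x i)) ^ n) y = 0) := by
  constructor
  · intro h c y; exact h _ y
  · intro h a y
    obtain ⟨c, hc⟩ : ∃ c : Fin m → ℤ, ∑ i, c i • x i = a := by
      have : a ∈ Submodule.span ℤ (Set.range x) := hgen ▸ Submodule.mem_top
      exact (Submodule.mem_span_range_iff_exists_fun ℤ).mp this
    set s : L := ∑ i, x i with hs
    set A : Module.End ℤ L := LieAlgebra.ad ℤ L a with hA
    set B : Module.End ℤ L := LieAlgebra.ad ℤ L s with hB
    set k : ℕ := ∑ i, (c i).natAbs with hk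
    have hki : ∀ i, (c i).natAbs ≤ k := fun i =>
      Finset.single_le_sum (f := fun i => (c i).natAbs) (fun j _ => Nat.zero_le _) (Finset.mem_univ i)
    have h0 : ∀ t : ℕ, k ≤ t → ((A + (t:ℤ) • B) ^ n) y = 0 := by
      intro t ht
      have hnn : ∀ i, 0 ≤ c i + (t : ℤ) := by
        intro i
        have h1 : (c i).natAbs ≤ t := le_trans (hki i) ht
        omega
      have heq : A + (t:ℤ) • B = LieAlgebra.ad ℤ L (∑ i, ((((c i + t).toNat : ℕ) : ℤ)) • x i) := by
        have : (∑ i, ((((c i + (t:ℤ)).toNat : ℕ) : ℤ)) • x i) = a + (t:ℤ) • s := by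
          rw [← hc, hs, Finset.smul_sum, ← Finset.sum_add_distrib]
          apply Finset.sum_congr rfl
          intro i _
          rw [Int.toNat_of_nonneg (hnn i), add_smul]
        rw [this, map_add, map_smul]
      rw [heq]
      exact h (fun i => (c i + t).toNat) y
    obtain ⟨C, hCtop, hC0, hC⟩ := aux_expand A B n
    have hu : ∀ t : ℕ, k ≤ t →
        ∑ j ∈ Finset.range (n+1), ((t:ℤ))^j • (C j y) = 0 := by
      intro t ht
      have := h0 t ht
      rw [hC (t : ℤ), LinearMap.sum_apply] at this
      simp only [LinearMap.smul_apply] at this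
      exact this
    have := aux_poly_vanish n (fun j => C j y) k hu 0
    have hz : ∑ j ∈ Finset.range (n+1), (0:ℤ)^j • (C j y) = C 0 y := by
      rw [Finset.sum_eq_single 0]
      · simp
      · intro b _ hb; rw [zero_pow hb, zero_smul]
      · intro hb; simp at hb
    rw [hz] at this
    rw [← hC0]
    exact this
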